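/- Let G be a simple graph, x a vertex with neighborhood N₁ and second neighborhood N₂ (vertices at distance exactly 2 from x). Let X, X̄ partition N₁, let ε ∈ ℝ, and let f be the function with f(x)=0, f = ε on X, f = 1 on X̄, and f(z) = 2(ε·d_X(z) + d_{X̄}(z))/d_{N₁}(z) for z ∈ N₂ (where d_S(z) is the number of neighbors of z in S and d_{N₁}(z) > 0 for z ∈ N₂). Then for each z ∈ N₂, ∑_{y ∈ N₁, y ∼ z} [ (1/4)(f(z)−f(y))² − (1/2)(f(z)−f(y))(f(y)−f(x)) ] = −(ε·d_X(z) + d_{X̄}(z))²/d_{N₁}(z) + (3/4)(ε²·d_X(z) + d_{X̄}(z)). -/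

import Mathlib

open Finset

theorem stmt2 {V : Type*} [DecidableEq V] (G : SimpleGraph V) [G.LocallyFinite]
    (x : V) (X Xbar : Finset V)
    (hpart : X ∪ Xbar = G.neighborFinset x) (hdisj : Disjoint X Xbar)
    (ε : ℝ) (f : V → ℝ)
    (hfx : f x = 0) (hfX : ∀ z ∈ X, f z = ε) (hfXbar : ∀ z ∈ Xbar, f z = 1)
    (z : V) (hzx : z ≠ x) (hznadj : ¬ G.Adj x z)
    (hz2 : (G.neighborFinset z ∩ G.neighborFinset x).Nonempty)
    (hfz : f z = 2 * (ε * ((G.neighborFinset z ∩ X).card : ℝ)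
        + ((G.neighborFinset z ∩ Xbar).card : ℝ))
      / ((G.neighborFinset z ∩ G.neighborFinset x).card : ℝ)) :
    ∑ y ∈ G.neighborFinset z ∩ G.neighborFinset x,
        ((1 / 4) * (f z - f y) ^ 2 - (1 / 2) * (f z - f y) * (f y - f x))
      = - (ε * ((G.neighborFinset z ∩ X).card : ℝ)
            + ((G.neighborFinset z ∩ Xbar).card : ℝ)) ^ 2
          / ((G.neighborFinset z ∩ G.neighborFinset x).card : ℝ)
        + (3 / 4) * (ε ^ 2 * ((G.neighborFinset z ∩ X).card : ℝ)
            + ((G.neighborFinset z ∩ Xbar).card : ℝ)) := by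
  have hset : G.neighborFinset z ∩ G.neighborFinset x
      = (G.neighborFinset z ∩ X) ∪ (G.neighborFinset z ∩ Xbar) := by
    rw [← hpart, inter_union_distrib_left]
  have hd : Disjoint (G.neighborFinset z ∩ X) (G.neighborFinset z ∩ Xbar) :=
    (hdisj.mono inter_subset_right inter_subset_right)
  set a := ((G.neighborFinset z ∩ X).card : ℝ)
  set b := ((G.neighborFinset z ∩ Xbar).card : ℝ)
  have hcard : ((G.neighborFinset z ∩ G.neighborFinset x).card : ℝ) = a + b := by
    rw [hset, card_union_of_disjoint hd]; push_cast; ring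
  have hn : ((G.neighborFinset z ∩ G.neighborFinset x).card : ℝ) ≠ 0 := by
    exact_mod_cast Finset.card_ne_zero_of_mem hz2.choose_spec
  have hab : a + b ≠ 0 := hcard ▸ hn
  have h1 : ∑ y ∈ G.neighborFinset z ∩ X,
      ((1 / 4) * (f z - f y) ^ 2 - (1 / 2) * (f z - f y) * (f y - f x))
      = a * ((1 / 4) * (f z - ε) ^ 2 - (1 / 2) * (f z - ε) * (ε - 0)) := by
    rw [sum_congr rfl (g := fun _ => (1 / 4) * (f z - ε) ^ 2 - (1 / 2) * (f z - ε) * (ε - 0))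
      (fun y hy => by rw [hfX y (mem_of_mem_inter_right hy), hfx]), sum_const, nsmul_eq_mul]
  have h2 : ∑ y ∈ G.neighborFinset z ∩ Xbar,
      ((1 / 4) * (f z - f y) ^ 2 - (1 / 2) * (f z - f y) * (f y - f x))
      = b * ((1 / 4) * (f z - 1) ^ 2 - (1 / 2) * (f z - 1) * (1 - 0)) := by
    rw [sum_congr rfl (g := fun _ => (1 / 4) * (f z - 1) ^ 2 - (1 / 2) * (f z - 1) * (1 - 0))
      (fun y hy => by rw [hfXbar y (mem_of_mem_inter_right hy), hfx]), sum_const, nsmul_eq_mul]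
  rw [hset, sum_union hd, h1, h2, hfz, hcard, ← hset, hcard]
  field_simp
  ring
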